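/- For complex x,y,z,q with |q|<1 (avoiding poles), Σ_{n≥0} x^n q^{n(n+1)/2} (-z;q)_n / ((y;q)_{n+1} (q;q)_n) = (-xq;q)_∞ · Σ_{n≥0} (zx)^n q^{n²} (-qy/z;q)_n / ((-xq;q)_n (y;q)_{n+1} (q;q)_n). -/

import Mathlib

open scoped BigOperators

noncomputable def qPoch (a q : ℂ) (n : ℕ) : ℂ := ∏ i ∈ Finset.range n, (1 - a * q ^ i)

noncomputable def qPochInf (a q : ℂ) : ℂ := ∏' i : ℕ, (1 - a * q ^ i)

/-- q-Pochhammer with integer index, standard convention for negative index. -/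
noncomputable def qPochZ (a q : ℂ) (n : ℤ) : ℂ :=
  if 0 ≤ n then ∏ i ∈ Finset.range n.toNat, (1 - a * q ^ i)
  else 1 / ∏ i ∈ Finset.range (-n).toNat, (1 - a * q ^ (-(i : ℤ) - 1))

/-- Gaussian binomial coefficient, zero unless 0 ≤ k ≤ n. -/
noncomputable def qbinom (n k : ℤ) (q : ℂ) : ℂ :=
  if 0 ≤ k ∧ k ≤ n then
    (∏ i ∈ Finset.range k.toNat, (1 - q ^ (n - (i : ℤ)))) /
      (∏ i ∈ Finset.range k.toNat, (1 - q ^ (i + 1)))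
  else 0

open Finset Filter Topology


lemma RqAux.summable_log {f : ℕ → ℂ} (hs : Summable f) (h0 : ∀ i, 1 + f i ≠ 0) :
    Summable (fun i => Complex.log (1 + f i)) := by
  have h1 : Tendsto (fun i => ‖f i‖) atTop (𝓝 0) := by
    simpa using hs.tendsto_atTop_zero.norm
  have h2 : ∀ᶠ i in atTop, ‖Complex.log (1 + f i)‖ ≤ (3/2) * ‖f i‖ := by
    filter_upwards [h1.eventually_le_const (by norm_num : (0:ℝ) < 1/2)] with i hi
    exact Complex.norm_log_one_add_half_le_self hi
  refine Summable.of_norm_bounded_eventually (g := fun i => (3/2) * ‖f i‖) (hs.norm.mul_left _) ?_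
  rwa [Nat.cofinite_eq_atTop]

lemma RqAux.tprod_one_add {f : ℕ → ℂ} (hs : Summable f) (h0 : ∀ i, 1 + f i ≠ 0) :
    Multipliable (fun i => 1 + f i) ∧
      (∏' i, (1 + f i)) = Complex.exp (∑' i, Complex.log (1 + f i)) := by
  have hlog := RqAux.summable_log hs h0
  have hm := Complex.multipliable_of_summable_log hlog
  have he := Complex.cexp_tsum_eq_tprod h0 hlog
  exact ⟨hm, by simpa using he.symm⟩

lemma RqAux.tprod_one_add_ne_zero {f : ℕ → ℂ} (hs : Summable f) (h0 : ∀ i, 1 + f i ≠ 0) :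
    (∏' i, (1 + f i)) ≠ 0 := by
  rw [(RqAux.tprod_one_add hs h0).2]; exact Complex.exp_ne_zero _

lemma RqAux.tprod_split {f : ℕ → ℂ} (hs : Summable f) (h0 : ∀ i, 1 + f i ≠ 0) (n : ℕ) :
    (∏' i, (1 + f i)) = (∏ i ∈ range n, (1 + f i)) * ∏' i, (1 + f (i + n)) := by
  have hlog := RqAux.summable_log hs h0
  have htail : Summable (fun i => f (i + n)) := (summable_nat_add_iff n).2 hs
  rw [(RqAux.tprod_one_add hs h0).2, (RqAux.tprod_one_add htail (fun i => h0 (i+n))).2,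
    ← hlog.sum_add_tsum_nat_add n, Complex.exp_add]
  congr 1
  rw [Complex.exp_sum]
  exact (prod_congr rfl fun i _ => (Complex.exp_log (h0 i)).symm).symm

section Base
variable {q : ℂ}

lemma RqAux.normq (hq : ‖q‖ < 1) : ‖q‖ < 1 := hq

lemma RqAux.summable_aq (hq : ‖q‖ < 1) (a : ℂ) : Summable (fun i : ℕ => -(a * q ^ i)) :=
  (((summable_geometric_of_norm_lt_one (RqAux.normq hq)).mul_left a)).neg

lemma RqAux.one_add_eq (a : ℂ) (i : ℕ) : 1 + -(a * q ^ i) = 1 - a * q ^ i := by ring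

lemma RqAux.qPoch_tendsto (hq : ‖q‖ < 1) (a : ℂ) (h0 : ∀ i : ℕ, 1 - a * q ^ i ≠ 0) :
    Tendsto (fun n => qPoch a q n) atTop (𝓝 (qPochInf a q)) := by
  have hm := (RqAux.tprod_one_add (RqAux.summable_aq hq a)
      (fun i => by rw [RqAux.one_add_eq]; exact h0 i)).1
  have h2 := hm.hasProd.tendsto_prod_nat
  rw [hm.hasProd.tprod_eq] at h2
  simp only [RqAux.one_add_eq] at h2
  exact h2

lemma RqAux.qPochInf_ne_zero (hq : ‖q‖ < 1) (a : ℂ) (h0 : ∀ i : ℕ, 1 - a * q ^ i ≠ 0) :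
    qPochInf a q ≠ 0 := by
  have := RqAux.tprod_one_add_ne_zero (RqAux.summable_aq hq a)
      (fun i => by rw [RqAux.one_add_eq]; exact h0 i)
  rw [qPochInf]
  simpa only [RqAux.one_add_eq] using this

lemma RqAux.qPoch_ne_zero (a : ℂ) (h0 : ∀ i : ℕ, 1 - a * q ^ i ≠ 0) (n : ℕ) :
    qPoch a q n ≠ 0 :=
  Finset.prod_ne_zero_iff.2 fun i _ => h0 i

lemma RqAux.qPoch_lower (hq : ‖q‖ < 1) (a : ℂ) (h0 : ∀ i : ℕ, 1 - a * q ^ i ≠ 0) :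
    ∃ c : ℝ, 0 < c ∧ ∀ n, c ≤ ‖qPoch a q n‖ := by
  have hpos : ∀ n, 0 < ‖qPoch a q n‖ :=
    fun n => norm_pos_iff.2 (RqAux.qPoch_ne_zero a h0 n)
  have ht : Tendsto (fun n => ‖qPoch a q n‖⁻¹) atTop (𝓝 ‖qPochInf a q‖⁻¹) :=
    ((RqAux.qPoch_tendsto hq a h0).norm).inv₀
      (norm_ne_zero_iff.2 (RqAux.qPochInf_ne_zero hq a h0))
  obtain ⟨C, hC⟩ := ht.bddAbove_range
  have hC1 : (1:ℝ) ≤ C := by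
    have := hC ⟨0, rfl⟩
    simpa [qPoch] using this
  refine ⟨C⁻¹, by positivity, fun n => ?_⟩
  have h2 : ‖qPoch a q n‖⁻¹ ≤ C := hC ⟨n, rfl⟩
  calc C⁻¹ ≤ (‖qPoch a q n‖⁻¹)⁻¹ := inv_anti₀ (inv_pos.2 (hpos n)) h2
    _ = ‖qPoch a q n‖ := by rw [inv_inv]

lemma RqAux.qPoch_upper (hq : ‖q‖ < 1) (a : ℂ) (n : ℕ) :
    ‖qPoch a q n‖ ≤ Real.exp (‖a‖ * (1 - ‖q‖)⁻¹) := by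
  have hq' := RqAux.normq hq
  have h1 : ‖qPoch a q n‖ ≤ ∏ i ∈ range n, Real.exp (‖a‖ * ‖q‖ ^ i) := by
    rw [qPoch]
    refine (Finset.norm_prod_le _ _).trans (Finset.prod_le_prod (fun i _ => norm_nonneg _) ?_)
    intro i _
    calc ‖1 - a * q ^ i‖ ≤ ‖(1:ℂ)‖ + ‖a * q ^ i‖ := norm_sub_le _ _
      _ = 1 + ‖a‖ * ‖q‖ ^ i := by simp [norm_mul, norm_pow]
      _ ≤ Real.exp (‖a‖ * ‖q‖ ^ i) := by
          have := Real.add_one_le_exp (‖a‖ * ‖q‖ ^ i); linarith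
  rw [← Real.exp_sum] at h1
  refine h1.trans (Real.exp_le_exp.2 ?_)
  rw [← Finset.mul_sum]
  refine mul_le_mul_of_nonneg_left ?_ (norm_nonneg a)
  have hs : Summable (fun i : ℕ => ‖q‖ ^ i) := summable_geometric_of_lt_one (norm_nonneg q) hq'
  calc ∑ i ∈ range n, ‖q‖ ^ i ≤ ∑' i : ℕ, ‖q‖ ^ i :=
      Summable.sum_le_tsum _ (fun i _ => by positivity) hs
    _ = (1 - ‖q‖)⁻¹ := tsum_geometric_of_lt_one (norm_nonneg q) hq'

end Base




lemma RqAux.tri1 (n : ℕ) : (n+1)*n/2 = n*(n-1)/2 + n := by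
  cases n with
  | zero => simp
  | succ j =>
    obtain ⟨a, ha⟩ := Nat.even_mul_succ_self j
    have h1 : (j+1+1)*(j+1) = (a+a) + 2*(j+1) := by rw [← ha]; ring
    have h2 : (j+1)*(j+1-1) = a+a := by simp; rw [← ha]; ring
    rw [h1, h2]; omega

lemma RqAux.tri2 (n k : ℕ) : n^2 + (k*(k+1)/2 + n*k) = (n+k)*(n+k+1)/2 + n*(n-1)/2 := by
  obtain ⟨b, hb⟩ := Nat.even_mul_succ_self k
  cases n with
  | zero => simp [hb]
  | succ j =>
    obtain ⟨a, ha⟩ := Nat.even_mul_succ_self j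
    have h2 : (j+1)*(j+1-1) = a+a := by simp; rw [← ha]; ring
    have h3 : (j+1+k)*(j+1+k+1) = (a+a) + (b+b) + 2*((j+1)*k) + 2*(j+1) := by
      rw [← ha, ← hb]; ring
    have h4 : (j+1)^2 = (a+a) + (j+1) := by rw [← ha]; ring
    rw [h2, h3, h4, hb]
    generalize (j+1)*k = P
    omega

lemma RqAux.tri3 (n k : ℕ) : k*(k-1)/2 + (n+1)*k = k*(k+1)/2 + n*k := by
  cases k with
  | zero => simp
  | succ j =>
    obtain ⟨a, ha⟩ := Nat.even_mul_succ_self j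
    have h1 : (j+1)*(j+1-1) = a+a := by simp; rw [← ha]; ring
    have h2 : (j+1)*(j+1+1) = (a+a) + 2*(j+1) := by rw [← ha]; ring
    have h3 : (n+1)*(j+1) = n*(j+1) + (j+1) := by ring
    rw [h1, h2, h3]
    generalize n*(j+1) = P
    omega

lemma RqAux.qPoch_succ (a q : ℂ) (n : ℕ) : qPoch a q (n+1) = qPoch a q n * (1 - a * q^n) :=
  Finset.prod_range_succ _ _

lemma RqAux.qPoch_zero (a q : ℂ) : qPoch a q 0 = 1 := rfl

noncomputable def RqAux.gq (q : ℂ) (m n : ℕ) : ℂ :=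
  if n ≤ m then qPoch q q m / (qPoch q q n * qPoch q q (m - n)) else 0

variable {q : ℂ}

lemma RqAux.gq_zero (hQ : ∀ k, qPoch q q k ≠ 0) (m : ℕ) : gq q m 0 = 1 := by
  simp [gq, qPoch_zero]
  exact hQ m

lemma RqAux.gq_self (hQ : ∀ k, qPoch q q k ≠ 0) (m : ℕ) : gq q m m = 1 := by
  simp [gq, qPoch_zero]
  exact hQ m

lemma RqAux.gq_of_gt {m n : ℕ} (h : m < n) : gq q m n = 0 := by
  simp [gq]; omega

lemma RqAux.pascal (hQ : ∀ k, qPoch q q k ≠ 0) (m n : ℕ) :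
    gq q (m+1) (n+1) = gq q m n + q^(n+1) * gq q m (n+1) := by
  by_cases h1 : n + 1 ≤ m
  · obtain ⟨k, rfl⟩ : ∃ k, m = n + 1 + k := ⟨m - (n+1), by omega⟩
    have e1 : n + 1 + k + 1 - (n + 1) = k + 1 := by omega
    have e2 : n + 1 + k - n = k + 1 := by omega
    have e3 : n + 1 + k - (n + 1) = k := by omega
    rw [gq, gq, gq, if_pos (by omega), if_pos (by omega), if_pos (by omega), e1, e2, e3]
    have hA := hQ n
    have hB := hQ k
    have hM := hQ (n+1+k)
    have hA1 : (1 : ℂ) - q * q^n ≠ 0 := by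
      have h := hQ (n+1); rw [qPoch_succ] at h; exact (mul_ne_zero_iff.1 h).2
    have hB1 : (1 : ℂ) - q * q^k ≠ 0 := by
      have h := hQ (k+1); rw [qPoch_succ] at h; exact (mul_ne_zero_iff.1 h).2
    rw [qPoch_succ q q (n+1+k), qPoch_succ q q n, qPoch_succ q q k]
    field_simp
    ring
  · by_cases h2 : n = m
    · subst h2
      rw [gq_self hQ, gq_self hQ, gq_of_gt (by omega)]
      ring
    · rw [gq_of_gt (by omega), gq_of_gt (by omega), gq_of_gt (by omega)]
      ring

lemma RqAux.polyId (hQ : ∀ k, qPoch q q k ≠ 0) :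
    ∀ (m : ℕ) (y z : ℂ),
      ∑ n ∈ range (m+1), gq q m n * q^(n*(n-1)/2) *
          (∏ i ∈ range n, (z + y * q^(i+1))) * (∏ i ∈ Ico (n+1) (m+1), (1 - y * q^i))
        = ∏ i ∈ range m, (1 + z * q^i) := by
  intro m
  induction m with
  | zero => intro y z; simp [gq_zero hQ]
  | succ m IH =>
    intro y z
    set W : ℕ → ℂ := fun n => ∏ i ∈ range n, (z + y * q^(i+1)) with hW
    set T : ℕ → ℂ := fun n => q^(n*(n-1)/2) * W n * (∏ i ∈ Ico (n+1) (m+2), (1 - y * q^i))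
      with hT
    have hTdef : ∀ n, gq q (m+1) n * q^(n*(n-1)/2) * W n *
        (∏ i ∈ Ico (n+1) (m+1+1), (1 - y * q^i)) = gq q (m+1) n * T n := by
      intro n; simp only [hT]; ring
    calc ∑ n ∈ range (m+2), gq q (m+1) n * q^(n*(n-1)/2) * W n *
            (∏ i ∈ Ico (n+1) (m+1+1), (1 - y * q^i))
        = ∑ n ∈ range (m+2), gq q (m+1) n * T n := by
          exact Finset.sum_congr rfl fun n _ => hTdef n
      _ = ∑ n ∈ range (m+2), q^n * gq q m n * T n
            + ∑ n ∈ range (m+1), gq q m n * T (n+1) := by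
          rw [Finset.sum_range_succ' (fun n => gq q (m+1) n * T n) (m+1),
            Finset.sum_range_succ' (fun n => q^n * gq q m n * T n) (m+1)]
          simp only [pascal hQ, gq_zero hQ, pow_zero, one_mul, add_mul]
          rw [Finset.sum_add_distrib]
          ring
      _ = ∑ n ∈ range (m+1), q^n * gq q m n * T n
            + ∑ n ∈ range (m+1), gq q m n * T (n+1) := by
          rw [Finset.sum_range_succ]
          rw [gq_of_gt (by omega)]
          simp
      _ = ∑ n ∈ range (m+1), gq q m n * (q^n * T n + T (n+1)) := by
          rw [← Finset.sum_add_distrib]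
          exact Finset.sum_congr rfl fun n _ => by ring
      _ = ∑ n ∈ range (m+1), gq q m n * ((1+z) * (q^(n*(n-1)/2) *
            (∏ i ∈ range n, (z*q + (y*q) * q^(i+1))) *
            (∏ i ∈ Ico (n+1) (m+1), (1 - (y*q) * q^i)))) := by
          refine Finset.sum_congr rfl fun n hn => ?_
          have hnm : n ≤ m := by simpa using Nat.lt_succ_iff.1 (Finset.mem_range.1 hn)
          congr 1
          have e1 : ∏ i ∈ range n, (z*q + (y*q) * q^(i+1)) = q^n * W n := by
            have h' : ∀ i ∈ range n, z*q + (y*q)*q^(i+1) = q * (z + y*q^(i+1)) :=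
              fun i _ => by ring
            rw [Finset.prod_congr rfl h', Finset.prod_mul_distrib, Finset.prod_const,
              Finset.card_range, hW]
          have e2 : ∏ i ∈ Ico (n+1) (m+1), (1 - (y*q) * q^i)
              = ∏ i ∈ Ico (n+2) (m+2), (1 - y * q^i) := by
            rw [Finset.prod_Ico_eq_prod_range, Finset.prod_Ico_eq_prod_range]
            have e3 : m + 1 - (n+1) = m + 2 - (n+2) := by omega
            rw [e3]
            exact Finset.prod_congr rfl fun i _ => by ring
          have e4 : ∏ i ∈ Ico (n+1) (m+2), (1 - y * q^i)
              = (1 - y * q^(n+1)) * ∏ i ∈ Ico (n+2) (m+2), (1 - y * q^i) :=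
            Finset.prod_eq_prod_Ico_succ_bot (by omega) _
          have e5 : T (n+1) = q^(n*(n-1)/2) * q^n * (W n * (z + y * q^(n+1))) *
              ∏ i ∈ Ico (n+2) (m+2), (1 - y * q^i) := by
            simp only [hT, hW, Nat.succ_sub_one]
            rw [tri1 n, pow_add, Finset.prod_range_succ]
          rw [e5, e1, e2]
          simp only [hT]
          rw [e4]
          ring
      _ = (1+z) * ∑ n ∈ range (m+1), gq q m n * q^(n*(n-1)/2) *
            (∏ i ∈ range n, (z*q + (y*q) * q^(i+1))) *
            (∏ i ∈ Ico (n+1) (m+1), (1 - (y*q) * q^i)) := by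
          rw [Finset.mul_sum]
          exact Finset.sum_congr rfl fun n _ => by ring
      _ = (1+z) * ∏ i ∈ range m, (1 + (z*q) * q^i) := by rw [IH]
      _ = ∏ i ∈ range (m+1), (1 + z * q^i) := by
          rw [Finset.prod_range_succ']
          simp only [pow_zero, mul_one]
          rw [mul_comm]
          congr 1
          exact Finset.prod_congr rfl fun i _ => by ring



section Euler
variable {q : ℂ}

lemma RqAux.one_sub_ne {w : ℂ} (h : ‖w‖ < 1) : (1 : ℂ) - w ≠ 0 := by
  intro h'
  rw [sub_eq_zero] at h'
  rw [← h'] at h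
  simp at h

lemma RqAux.hQq (hq : ‖q‖ < 1) : ∀ k, qPoch q q k ≠ 0 := by
  intro k
  refine Finset.prod_ne_zero_iff.2 fun i _ => RqAux.one_sub_ne ?_
  rw [norm_mul, norm_pow, ← pow_succ']
  exact pow_lt_one₀ (norm_nonneg q) (RqAux.normq hq) (Nat.succ_ne_zero i)

lemma RqAux.qfac_ne (hq : ‖q‖ < 1) : ∀ i : ℕ, 1 - q * q ^ i ≠ 0 := fun i => by
  have h := RqAux.hQq hq (i+1)
  rw [RqAux.qPoch_succ] at h
  exact (mul_ne_zero_iff.1 h).2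

lemma RqAux.euler (hq : ‖q‖ < 1) (t : ℂ) (h0 : ∀ i : ℕ, 1 + t * q ^ i ≠ 0) :
    (∏' i : ℕ, (1 + t * q ^ i)) = ∑' k : ℕ, q ^ (k*(k-1)/2) * t ^ k / qPoch q q k := by
  classical
  have hQ := RqAux.hQq hq
  have hq' := RqAux.normq hq
  have hs : Summable (fun i : ℕ => t * q ^ i) :=
    (summable_geometric_of_norm_lt_one hq').mul_left t
  have hm := (RqAux.tprod_one_add hs h0).1
  have hP : Tendsto (fun N => ∏ i ∈ range N, (1 + t * q ^ i)) atTop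
      (𝓝 (∏' i, (1 + t * q ^ i))) := by
    have := hm.hasProd.tendsto_prod_nat
    rwa [hm.hasProd.tprod_eq] at this
  set F : ℕ → ℕ → ℂ := fun N k => RqAux.gq q N k * (q ^ (k*(k-1)/2) * t ^ k) with hF
  have hfin : ∀ N, ∏ i ∈ range N, (1 + t * q ^ i) = ∑' k, F N k := by
    intro N
    have h1 := RqAux.polyId hQ N 0 t
    simp only [zero_mul, add_zero, mul_one, Finset.prod_const, Finset.card_range,
      mul_zero, sub_zero, Finset.prod_const_one] at h1
    rw [tsum_eq_sum (s := range (N+1)) (fun b hb => by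
      simp only [hF]
      rw [RqAux.gq_of_gt (by simpa using hb), zero_mul])]
    rw [← h1]
    refine (Finset.sum_congr rfl fun n _ => ?_).symm
    simp only [hF]
    ring
  have h0q := RqAux.qfac_ne hq
  have hQinf : qPochInf q q ≠ 0 := RqAux.qPochInf_ne_zero hq q h0q
  have htP : Tendsto (fun N => qPoch q q N) atTop (𝓝 (qPochInf q q)) :=
    RqAux.qPoch_tendsto hq q h0q
  have hlim : ∀ k, Tendsto (fun N => F N k) atTop
      (𝓝 (q ^ (k*(k-1)/2) * t ^ k / qPoch q q k)) := by
    intro k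
    have ht2 : Tendsto (fun N => qPoch q q (N - k)) atTop (𝓝 (qPochInf q q)) :=
      htP.comp (tendsto_sub_atTop_nat k)
    have hden : qPoch q q k * qPochInf q q ≠ 0 := mul_ne_zero (hQ k) hQinf
    have hg0 : Tendsto (fun N => qPoch q q N / (qPoch q q k * qPoch q q (N - k))) atTop
        (𝓝 (qPochInf q q / (qPoch q q k * qPochInf q q))) :=
      htP.div (tendsto_const_nhds.mul ht2) hden
    have hg : Tendsto (fun N => RqAux.gq q N k) atTop
        (𝓝 (qPochInf q q / (qPoch q q k * qPochInf q q))) := by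
      refine hg0.congr' ?_
      filter_upwards [eventually_ge_atTop k] with N hN
      rw [RqAux.gq, if_pos hN]
    have hgc := hg.mul_const (q ^ (k*(k-1)/2) * t ^ k)
    have heq : qPochInf q q / (qPoch q q k * qPochInf q q) * (q ^ (k*(k-1)/2) * t ^ k)
        = q ^ (k*(k-1)/2) * t ^ k / qPoch q q k := by
      field_simp
    rw [heq] at hgc
    exact hgc
  obtain ⟨c, hc0, hc⟩ := RqAux.qPoch_lower hq q h0q
  set C := Real.exp (‖q‖ * (1 - ‖q‖)⁻¹) / (c * c) with hC
  have hCpos : 0 < C := by positivity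
  have hgbd : ∀ N k, ‖RqAux.gq q N k‖ ≤ C := by
    intro N k
    by_cases h : k ≤ N
    · rw [RqAux.gq, if_pos h, norm_div, norm_mul]
      refine div_le_div₀ (le_of_lt (Real.exp_pos _)) (RqAux.qPoch_upper hq q N)
        (by positivity) ?_
      exact mul_le_mul (hc k) (hc (N - k)) (le_of_lt hc0) (norm_nonneg _)
    · rw [RqAux.gq, if_neg h, norm_zero]
      exact le_of_lt hCpos
  set bound : ℕ → ℝ := fun k => C * (‖t‖ ^ k * ‖q‖ ^ (k*(k-1)/2)) with hbnd
  have hbound : ∀ N k, ‖F N k‖ ≤ bound k := by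
    intro N k
    simp only [hF, hbnd]
    rw [norm_mul, norm_mul, norm_pow, norm_pow]
    calc ‖RqAux.gq q N k‖ * (‖q‖ ^ (k*(k-1)/2) * ‖t‖ ^ k)
        ≤ C * (‖q‖ ^ (k*(k-1)/2) * ‖t‖ ^ k) :=
          mul_le_mul_of_nonneg_right (hgbd N k) (by positivity)
      _ = C * (‖t‖ ^ k * ‖q‖ ^ (k*(k-1)/2)) := by ring
  have hsumbase : Summable (fun k : ℕ => ‖t‖ ^ k * ‖q‖ ^ (k*(k-1)/2)) := by
    refine summable_of_ratio_norm_eventually_le (r := 1/2) (by norm_num) ?_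
    have h2 : Tendsto (fun k : ℕ => ‖t‖ * ‖q‖ ^ k) atTop (𝓝 0) := by
      have := (tendsto_pow_atTop_nhds_zero_of_lt_one (norm_nonneg q) hq').const_mul ‖t‖
      simpa using this
    filter_upwards [h2.eventually_le_const (by norm_num : (0:ℝ) < 1/2)] with k hk
    have e1 : (k+1)*(k+1-1)/2 = k*(k-1)/2 + k := by
      simpa using RqAux.tri1 k
    rw [Real.norm_eq_abs, Real.norm_eq_abs, abs_of_nonneg (by positivity),
      abs_of_nonneg (by positivity), e1]
    calc ‖t‖ ^ (k+1) * ‖q‖ ^ (k*(k-1)/2 + k)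
        = (‖t‖ ^ k * ‖q‖ ^ (k*(k-1)/2)) * (‖t‖ * ‖q‖ ^ k) := by
          rw [pow_add, pow_succ]; ring
      _ ≤ (‖t‖ ^ k * ‖q‖ ^ (k*(k-1)/2)) * (1/2) :=
          mul_le_mul_of_nonneg_left hk (by positivity)
      _ = 1/2 * (‖t‖ ^ k * ‖q‖ ^ (k*(k-1)/2)) := by ring
  have hsum : Summable bound := hsumbase.mul_left C
  have hdc := tendsto_tsum_of_dominated_convergence hsum hlim
    (Filter.Eventually.of_forall (fun N => hbound N))
  have hdc2 : Tendsto (fun N => ∏ i ∈ range N, (1 + t * q ^ i)) atTop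
      (𝓝 (∑' k, q ^ (k*(k-1)/2) * t ^ k / qPoch q q k)) :=
    hdc.congr (fun N => (hfin N).symm)
  exact tendsto_nhds_unique hP hdc2

end Euler

section Main

set_option maxHeartbeats 2000000

theorem stmt9 (q x y z : ℂ) (hq : ‖q‖ < 1)
    (hz : z ≠ 0) (hy : ∀ n : ℕ, y ≠ q ^ (-(n : ℤ)))
    (hx : ∀ n : ℕ, x * q ^ (n + 1) ≠ -1) :
    ∑' n : ℕ, x ^ n * q ^ (n * (n + 1) / 2) * qPoch (-z) q n /
        (qPoch y q (n + 1) * qPoch q q n) =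
      qPochInf (-(x * q)) q *
        ∑' n : ℕ, (z * x) ^ n * q ^ (n ^ 2) * qPoch (-(q * y / z)) q n /
          (qPoch (-(x * q)) q n * qPoch y q (n + 1) * qPoch q q n) := by
  classical
  have hq' : ‖q‖ < 1 := RqAux.normq hq
  have hQ : ∀ k, qPoch q q k ≠ 0 := RqAux.hQq hq
  have h0q : ∀ i : ℕ, 1 - q * q ^ i ≠ 0 := RqAux.qfac_ne hq
  -- y-factors are nonzero
  have hY0 : ∀ i : ℕ, 1 - y * q ^ i ≠ 0 := by
    intro i h
    rw [sub_eq_zero] at h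
    rcases eq_or_ne q 0 with hq0 | hq0
    · subst hq0
      rcases i with _ | j
      · apply hy 0
        simp only [Nat.cast_zero, neg_zero, zpow_zero]
        simpa using h.symm
      · simp [pow_succ] at h
    · apply hy i
      have : y = (q ^ i)⁻¹ := by
        field_simp
        exact h.symm
      rw [this, zpow_neg, zpow_natCast]
  have hYn : ∀ n, qPoch y q n ≠ 0 := fun n =>
    Finset.prod_ne_zero_iff.2 fun i _ => hY0 i
  -- x-factors are nonzero
  have hX0 : ∀ i : ℕ, 1 - -(x * q) * q ^ i ≠ 0 := by
    intro i h
    apply hx i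
    rw [pow_succ']
    linear_combination h
  have hXn : ∀ n, qPoch (-(x * q)) q n ≠ 0 := fun n =>
    Finset.prod_ne_zero_iff.2 fun i _ => hX0 i
  -- the double-indexed family
  set F : ℕ × ℕ → ℂ := fun p =>
    (z * x) ^ p.1 * q ^ p.1 ^ 2 * qPoch (-(q * y / z)) q p.1 *
      (x ^ p.2 * q ^ (p.2 * (p.2 + 1) / 2 + p.1 * p.2)) /
      (qPoch y q (p.1 + 1) * qPoch q q p.1 * qPoch q q p.2) with hF
  -- summability of F
  obtain ⟨cy, hcy0, hcy⟩ := RqAux.qPoch_lower hq y hY0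
  obtain ⟨cq, hcq0, hcq⟩ := RqAux.qPoch_lower hq q h0q
  set Cz := Real.exp (‖-(q * y / z)‖ * (1 - ‖q‖)⁻¹) with hCz
  have hCz0 : 0 < Cz := Real.exp_pos _
  set A : ℕ → ℝ := fun n => Cz / (cy * cq) * ((‖z‖ * ‖x‖) ^ n * ‖q‖ ^ n ^ 2) with hA
  set B : ℕ → ℝ := fun k => 1 / cq * (‖x‖ ^ k * ‖q‖ ^ (k * (k + 1) / 2)) with hB
  have hFb : ∀ p : ℕ × ℕ, ‖F p‖ ≤ A p.1 * B p.2 := by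
    rintro ⟨n, k⟩
    simp only [hF, hA, hB, norm_div, norm_mul, norm_pow]
    have hnum : (‖z‖ * ‖x‖) ^ n * ‖q‖ ^ n ^ 2 * ‖qPoch (-(q * y / z)) q n‖ *
        (‖x‖ ^ k * ‖q‖ ^ (k * (k + 1) / 2 + n * k)) ≤
        (‖z‖ * ‖x‖) ^ n * ‖q‖ ^ n ^ 2 * Cz * (‖x‖ ^ k * ‖q‖ ^ (k * (k + 1) / 2)) := by
      have h1 : ‖qPoch (-(q * y / z)) q n‖ ≤ Cz := RqAux.qPoch_upper hq _ n
      have h2 : ‖q‖ ^ (k * (k + 1) / 2 + n * k) ≤ ‖q‖ ^ (k * (k + 1) / 2) := by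
        rw [pow_add]
        have h3 : ‖q‖ ^ (n * k) ≤ 1 := pow_le_one₀ (norm_nonneg q) (le_of_lt hq')
        calc ‖q‖ ^ (k * (k + 1) / 2) * ‖q‖ ^ (n * k)
            ≤ ‖q‖ ^ (k * (k + 1) / 2) * 1 :=
              mul_le_mul_of_nonneg_left h3 (by positivity)
          _ = ‖q‖ ^ (k * (k + 1) / 2) := mul_one _
      have h4 : 0 ≤ (‖z‖ * ‖x‖) ^ n * ‖q‖ ^ n ^ 2 := by positivity
      calc (‖z‖ * ‖x‖) ^ n * ‖q‖ ^ n ^ 2 * ‖qPoch (-(q * y / z)) q n‖ *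
            (‖x‖ ^ k * ‖q‖ ^ (k * (k + 1) / 2 + n * k))
          ≤ (‖z‖ * ‖x‖) ^ n * ‖q‖ ^ n ^ 2 * Cz * (‖x‖ ^ k * ‖q‖ ^ (k * (k + 1) / 2 + n * k)) := by
            apply mul_le_mul_of_nonneg_right _ (by positivity)
            exact mul_le_mul_of_nonneg_left h1 h4
        _ ≤ (‖z‖ * ‖x‖) ^ n * ‖q‖ ^ n ^ 2 * Cz * (‖x‖ ^ k * ‖q‖ ^ (k * (k + 1) / 2)) := by
            apply mul_le_mul_of_nonneg_left _ (by positivity)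
            exact mul_le_mul_of_nonneg_left h2 (by positivity)
    have hden : cy * cq * cq ≤ ‖qPoch y q (n + 1)‖ * ‖qPoch q q n‖ * ‖qPoch q q k‖ := by
      have := mul_le_mul (mul_le_mul (hcy (n+1)) (hcq n) (le_of_lt hcq0) (norm_nonneg _))
        (hcq k) (le_of_lt hcq0) (by positivity)
      exact this
    calc (‖z‖ * ‖x‖) ^ n * ‖q‖ ^ n ^ 2 * ‖qPoch (-(q * y / z)) q n‖ *
          (‖x‖ ^ k * ‖q‖ ^ (k * (k + 1) / 2 + n * k)) /
          (‖qPoch y q (n + 1)‖ * ‖qPoch q q n‖ * ‖qPoch q q k‖)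
        ≤ (‖z‖ * ‖x‖) ^ n * ‖q‖ ^ n ^ 2 * Cz * (‖x‖ ^ k * ‖q‖ ^ (k * (k + 1) / 2)) /
          (cy * cq * cq) := by
          apply div_le_div₀ (by positivity) hnum (by positivity) hden
      _ = Cz / (cy * cq) * ((‖z‖ * ‖x‖) ^ n * ‖q‖ ^ n ^ 2) *
          (1 / cq * (‖x‖ ^ k * ‖q‖ ^ (k * (k + 1) / 2))) := by
          rw [div_eq_iff (by positivity : cy * cq * cq ≠ 0)]
          field_simp
  have hAsum : Summable A := by
    apply Summable.mul_left
    refine summable_of_ratio_norm_eventually_le (r := 1/2) (by norm_num) ?_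
    have h2 : Tendsto (fun n : ℕ => (‖z‖ * ‖x‖) * ‖q‖ ^ (2 * n + 1)) atTop (𝓝 0) := by
      have h3 : Tendsto (fun n : ℕ => 2 * n + 1) atTop atTop :=
        Filter.tendsto_atTop_mono (fun n => by simp only [id_eq]; omega) tendsto_id
      have := ((tendsto_pow_atTop_nhds_zero_of_lt_one (norm_nonneg q) hq').comp h3).const_mul
        (‖z‖ * ‖x‖)
      simpa [Function.comp] using this
    filter_upwards [h2.eventually_le_const (by norm_num : (0:ℝ) < 1/2)] with n hn
    have e1 : (n + 1) ^ 2 = n ^ 2 + (2 * n + 1) := by ring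
    rw [Real.norm_eq_abs, Real.norm_eq_abs, abs_of_nonneg (by positivity),
      abs_of_nonneg (by positivity), e1]
    calc (‖z‖ * ‖x‖) ^ (n + 1) * ‖q‖ ^ (n ^ 2 + (2 * n + 1))
        = (‖z‖ * ‖x‖) ^ n * ‖q‖ ^ n ^ 2 * ((‖z‖ * ‖x‖) * ‖q‖ ^ (2 * n + 1)) := by
          rw [pow_add, pow_succ]; ring
      _ ≤ (‖z‖ * ‖x‖) ^ n * ‖q‖ ^ n ^ 2 * (1 / 2) :=
          mul_le_mul_of_nonneg_left hn (by positivity)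
      _ = 1 / 2 * ((‖z‖ * ‖x‖) ^ n * ‖q‖ ^ n ^ 2) := by ring
  have hBsum : Summable B := by
    apply Summable.mul_left
    refine summable_of_ratio_norm_eventually_le (r := 1/2) (by norm_num) ?_
    have h2 : Tendsto (fun k : ℕ => ‖x‖ * ‖q‖ ^ (k + 1)) atTop (𝓝 0) := by
      have h3 : Tendsto (fun k : ℕ => k + 1) atTop atTop :=
        Filter.tendsto_atTop_mono (fun n => by simp only [id_eq]; omega) tendsto_id
      have := ((tendsto_pow_atTop_nhds_zero_of_lt_one (norm_nonneg q) hq').comp h3).const_mul ‖x‖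
      simpa [Function.comp] using this
    filter_upwards [h2.eventually_le_const (by norm_num : (0:ℝ) < 1/2)] with k hk
    have e1 : (k + 1) * (k + 1 + 1) / 2 = k * (k + 1) / 2 + (k + 1) := by
      have h := RqAux.tri1 (k + 1)
      simpa [Nat.mul_comm] using h
    rw [Real.norm_eq_abs, Real.norm_eq_abs, abs_of_nonneg (by positivity),
      abs_of_nonneg (by positivity), e1]
    calc ‖x‖ ^ (k + 1) * ‖q‖ ^ (k * (k + 1) / 2 + (k + 1))
        = ‖x‖ ^ k * ‖q‖ ^ (k * (k + 1) / 2) * (‖x‖ * ‖q‖ ^ (k + 1)) := by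
          rw [pow_add, pow_succ]; ring
      _ ≤ ‖x‖ ^ k * ‖q‖ ^ (k * (k + 1) / 2) * (1 / 2) :=
          mul_le_mul_of_nonneg_left hk (by positivity)
      _ = 1 / 2 * (‖x‖ ^ k * ‖q‖ ^ (k * (k + 1) / 2)) := by ring
  have hApos : ∀ n, 0 ≤ A n := fun n => by simp only [hA]; positivity
  have hBpos : ∀ k, 0 ≤ B k := fun k => by simp only [hB]; positivity
  have hFsum : Summable F :=
    Summable.of_norm_bounded (hAsum.mul_of_nonneg hBsum hApos hBpos) hFb
  have hslice : ∀ n, Summable fun k => F (n, k) := fun n => hFsum.prod_factor n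

  -- split of the infinite product and Euler expansion, for each n
  set g : ℕ → ℂ := fun i => x * q ^ (i + 1) with hg
  have hgs : Summable g := by
    have h1 : Summable (fun i : ℕ => (x * q) * q ^ i) :=
      (summable_geometric_of_norm_lt_one hq').mul_left _
    refine h1.congr fun i => ?_
    simp only [hg]; ring
  have hg0 : ∀ i, 1 + g i ≠ 0 := by
    intro i h
    apply hx i
    simp only [hg] at h
    linear_combination h
  have hXsplit : ∀ n, qPochInf (-(x * q)) q
      = qPoch (-(x * q)) q n * ∏' i, (1 + (x * q ^ (n + 1)) * q ^ i) := by
    intro n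
    have h1 := RqAux.tprod_split hgs hg0 n
    have e1 : ∀ i, 1 + g i = 1 - -(x * q) * q ^ i := fun i => by simp only [hg]; ring
    have e2 : ∀ i, 1 + g (i + n) = 1 + (x * q ^ (n + 1)) * q ^ i := fun i => by
      simp only [hg]; ring
    rw [qPochInf]
    calc (∏' i, (1 - -(x * q) * q ^ i)) = ∏' i, (1 + g i) :=
        tprod_congr fun i => (e1 i).symm
      _ = (∏ i ∈ Finset.range n, (1 + g i)) * ∏' i, (1 + g (i + n)) := h1
      _ = qPoch (-(x * q)) q n * ∏' i, (1 + (x * q ^ (n + 1)) * q ^ i) := by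
          rw [qPoch]
          congr 1
          · exact Finset.prod_congr rfl fun i _ => e1 i
          · exact tprod_congr fun i => e2 i
  have hEuler : ∀ n : ℕ, (∏' i : ℕ, (1 + (x * q ^ (n + 1)) * q ^ i)) =
      ∑' k : ℕ, q ^ (k * (k - 1) / 2) * (x * q ^ (n + 1)) ^ k / qPoch q q k := by
    intro n
    refine RqAux.euler hq _ (fun i h => ?_)
    apply hx (n + i)
    rw [show n + i + 1 = (n + 1) + i by omega, pow_add]
    linear_combination h
  -- per-n identity
  have hper : ∀ n : ℕ, qPochInf (-(x * q)) q *
      ((z * x) ^ n * q ^ n ^ 2 * qPoch (-(q * y / z)) q n /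
        (qPoch (-(x * q)) q n * qPoch y q (n + 1) * qPoch q q n)) = ∑' k, F (n, k) := by
    intro n
    rw [hXsplit n, hEuler n, mul_comm (qPoch (-(x * q)) q n), mul_assoc]
    have hX : qPoch (-(x * q)) q n * ((z * x) ^ n * q ^ n ^ 2 * qPoch (-(q * y / z)) q n /
        (qPoch (-(x * q)) q n * qPoch y q (n + 1) * qPoch q q n)) =
        (z * x) ^ n * q ^ n ^ 2 * qPoch (-(q * y / z)) q n /
          (qPoch y q (n + 1) * qPoch q q n) := by
      field_simp [hXn n, hYn (n + 1), hQ n]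
    rw [hX, ← tsum_mul_right]
    refine tsum_congr fun k => ?_
    simp only [hF]
    have hpow : q ^ (k * (k - 1) / 2) * (x * q ^ (n + 1)) ^ k
        = x ^ k * q ^ (k * (k + 1) / 2 + n * k) := by
      calc q ^ (k * (k - 1) / 2) * (x * q ^ (n + 1)) ^ k
          = x ^ k * (q ^ (k * (k - 1) / 2) * q ^ ((n + 1) * k)) := by
            rw [mul_pow, ← pow_mul]; ring
        _ = x ^ k * q ^ (k * (k - 1) / 2 + (n + 1) * k) := by rw [pow_add]
        _ = x ^ k * q ^ (k * (k + 1) / 2 + n * k) := by rw [RqAux.tri3]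
    rw [div_mul_div_comm]
    congr 1
    · rw [← mul_assoc, hpow]; ring
    · ring
  -- diagonal term identity
  have hterm : ∀ m n : ℕ, n ≤ m → F (n, m - n) =
      x ^ m * q ^ (m * (m + 1) / 2) * (RqAux.gq q m n * q ^ (n * (n - 1) / 2) *
        (∏ i ∈ Finset.range n, (z + y * q ^ (i + 1))) *
        (∏ i ∈ Finset.Ico (n + 1) (m + 1), (1 - y * q ^ i))) /
      (qPoch y q (m + 1) * qPoch q q m) := by
    intro m n hnm
    obtain ⟨k, rfl⟩ : ∃ k, m = n + k := ⟨m - n, by omega⟩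
    rw [show n + k - n = k from by omega]
    simp only [hF]
    have hI : (∏ i ∈ Finset.Ico (n + 1) (n + k + 1), (1 - y * q ^ i)) ≠ 0 :=
      Finset.prod_ne_zero_iff.2 fun i _ => hY0 i
    have hb : qPoch y q (n + k + 1)
        = qPoch y q (n + 1) * ∏ i ∈ Finset.Ico (n + 1) (n + k + 1), (1 - y * q ^ i) := by
      rw [qPoch, qPoch, Finset.prod_range_mul_prod_Ico _ (by omega)]
    have ha : (∏ i ∈ Finset.range n, (z + y * q ^ (i + 1)))
        = z ^ n * qPoch (-(q * y / z)) q n := by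
      calc (∏ i ∈ Finset.range n, (z + y * q ^ (i + 1)))
          = ∏ i ∈ Finset.range n, (z * (1 - -(q * y / z) * q ^ i)) :=
            Finset.prod_congr rfl fun i _ => by field_simp; ring
        _ = z ^ n * qPoch (-(q * y / z)) q n := by
            rw [Finset.prod_mul_distrib, Finset.prod_const, Finset.card_range, qPoch]
    have hG : RqAux.gq q (n + k) n = qPoch q q (n + k) / (qPoch q q n * qPoch q q k) := by
      rw [RqAux.gq, if_pos (by omega), show n + k - n = k from by omega]
    have hpow2 : q ^ n ^ 2 * q ^ (k * (k + 1) / 2 + n * k)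
        = q ^ ((n + k) * (n + k + 1) / 2) * q ^ (n * (n - 1) / 2) := by
      rw [← pow_add, ← pow_add, RqAux.tri2]
    have hnum : (z * x) ^ n * q ^ n ^ 2 * qPoch (-(q * y / z)) q n *
        (x ^ k * q ^ (k * (k + 1) / 2 + n * k))
        = x ^ (n + k) * q ^ ((n + k) * (n + k + 1) / 2) *
          (q ^ (n * (n - 1) / 2) * (z ^ n * qPoch (-(q * y / z)) q n)) := by
      calc (z * x) ^ n * q ^ n ^ 2 * qPoch (-(q * y / z)) q n *
            (x ^ k * q ^ (k * (k + 1) / 2 + n * k))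
          = (q ^ n ^ 2 * q ^ (k * (k + 1) / 2 + n * k)) *
            (z ^ n * x ^ n * x ^ k * qPoch (-(q * y / z)) q n) := by
            rw [mul_pow]; ring
        _ = (q ^ ((n + k) * (n + k + 1) / 2) * q ^ (n * (n - 1) / 2)) *
            (z ^ n * x ^ n * x ^ k * qPoch (-(q * y / z)) q n) := by rw [hpow2]
        _ = x ^ (n + k) * q ^ ((n + k) * (n + k + 1) / 2) *
            (q ^ (n * (n - 1) / 2) * (z ^ n * qPoch (-(q * y / z)) q n)) := by
            rw [pow_add x]; ring
    rw [hnum, ← ha, hb, hG]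
    field_simp [hYn (n + 1), hQ n, hQ k, hQ (n + k), hI]
  -- antidiagonal sums
  have hdiag : ∀ m : ℕ, (∑ p ∈ Finset.HasAntidiagonal.antidiagonal m, F p) =
      x ^ m * q ^ (m * (m + 1) / 2) * qPoch (-z) q m /
        (qPoch y q (m + 1) * qPoch q q m) := by
    intro m
    rw [Finset.Nat.sum_antidiagonal_eq_sum_range_succ_mk]
    rw [Finset.sum_congr rfl (fun n hn => hterm m n (by
      have := Finset.mem_range.1 hn; omega))]
    rw [← Finset.sum_div, ← Finset.mul_sum, RqAux.polyId hQ m y z]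
    have hzp : qPoch (-z) q m = ∏ i ∈ Finset.range m, (1 + z * q ^ i) :=
      Finset.prod_congr rfl fun i _ => by ring
    rw [← hzp]
  -- final chain
  have hRHS : qPochInf (-(x * q)) q *
      (∑' n : ℕ, (z * x) ^ n * q ^ n ^ 2 * qPoch (-(q * y / z)) q n /
        (qPoch (-(x * q)) q n * qPoch y q (n + 1) * qPoch q q n)) = ∑' p : ℕ × ℕ, F p := by
    rw [← tsum_mul_left, tsum_congr hper]
    exact (Summable.tsum_prod' hFsum hslice).symm
  have hLHS : (∑' p : ℕ × ℕ, F p) = ∑' m : ℕ,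
      x ^ m * q ^ (m * (m + 1) / 2) * qPoch (-z) q m /
        (qPoch y q (m + 1) * qPoch q q m) := by
    calc (∑' p : ℕ × ℕ, F p)
        = ∑' σ : Σ m : ℕ, Finset.HasAntidiagonal.antidiagonal m, F (Finset.HasAntidiagonal.sigmaAntidiagonalEquivProd σ) :=
          (Finset.HasAntidiagonal.sigmaAntidiagonalEquivProd.tsum_eq F).symm
      _ = ∑' (m : ℕ) (p : Finset.HasAntidiagonal.antidiagonal m),
            F (Finset.HasAntidiagonal.sigmaAntidiagonalEquivProd ⟨m, p⟩) :=
          Summable.tsum_sigma' (fun m => (hasSum_fintype _).summable)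
            ((Equiv.summable_iff _).2 hFsum)
      _ = ∑' m : ℕ, ∑ p ∈ Finset.HasAntidiagonal.antidiagonal m, F p := by
          refine tsum_congr fun m => ?_
          rw [← Finset.tsum_subtype']
          exact tsum_congr fun p => by simp [Finset.HasAntidiagonal.sigmaAntidiagonalEquivProd]
      _ = _ := tsum_congr hdiag
  rw [hRHS, hLHS]

end Main
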